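/- Let q ≥ 5 be a prime power, F the finite field with q elements, and K a field extension of F with q² elements. Let S ⊆ K be a finite subset that contains no conjugate pair. Let 𝓕 ⊆ F^S be the F-span of the eight vectors obtained by evaluating the functions 1, x^{q+1}, x^{2(q+1)}, x^{3(q+1)}, x^q + x, x^{2q} + x², x^{3q} + x³, and x^{2q+1} + x^{q+2} at the points of S (all of these values lie in F). Then every nonzero vector of the Euclidean dual 𝓕^⊥ ⊆ F^S has Hamming weight at least 5. -/
import Mathlib


/-- The Euclidean dual of a linear code `C ⊆ F^ι`. -/
noncomputable def dualCode {F : Type*} [Field F] {ι : Type*} [Fintype ι]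
    (C : Submodule F (ι → F)) : Submodule F (ι → F) where
  carrier := {u | ∀ v ∈ C, ∑ i, u i * v i = 0}
  add_mem' := by
    intro a b ha hb v hv
    have h : ∑ i, (a i + b i) * v i = (∑ i, a i * v i) + ∑ i, b i * v i := by
      rw [← Finset.sum_add_distrib]
      exact Finset.sum_congr rfl fun i _ => add_mul _ _ _
    simp [h, ha v hv, hb v hv]
  zero_mem' := by
    intro v hv
    simp
  smul_mem' := by
    intro c a ha v hv
    have h : ∑ i, (c * a i) * v i = c * ∑ i, a i * v i := by
      rw [Finset.mul_sum]
      exact Finset.sum_congr rfl fun i _ => mul_assoc _ _ _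
    simp [smul_eq_mul, h, ha v hv]

/-- The minimum distance of a linear code: the least Hamming weight of a
nonzero codeword. -/
noncomputable def minDist {F : Type*} [Field F] [DecidableEq F] {ι : Type*} [Fintype ι]
    (C : Submodule F (ι → F)) : ℕ :=
  sInf {w | ∃ v ∈ C, v ≠ 0 ∧ hammingNorm v = w}


open Finset Polynomial

/-- Lagrange: if a weight vector `c` supported on `≤ 4` points kills `1, w, w², w³`
and the `w`-values separate `z` from the rest, then `c z = 0`. -/
lemma lag_aux {F ι : Type*} [Field F] [DecidableEq ι] (T : Finset ι) (hT : T.card ≤ 4)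
    (c w : ι → F) (h : ∀ j < 4, ∑ x ∈ T, c x * w x ^ j = 0)
    (z : ι) (hz : z ∈ T) (hdist : ∀ x ∈ T, x ≠ z → w x ≠ w z) : c z = 0 := by
  set g : Polynomial F := ∏ x ∈ T.erase z, (X - C (w x)) with hg
  have hdeg : g.natDegree < 4 := by
    have h1 : g.natDegree = ∑ x ∈ T.erase z, (X - C (w x)).natDegree := by
      rw [hg]; exact natDegree_prod _ _ (fun i _ => X_sub_C_ne_zero _)
    have h2 : ∑ x ∈ T.erase z, (X - C (w x)).natDegree = (T.erase z).card := by
      simp [natDegree_X_sub_C]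
    have h3 := Finset.card_erase_lt_of_mem hz
    omega
  have key : ∑ x ∈ T, c x * g.eval (w x) = 0 := by
    calc ∑ x ∈ T, c x * g.eval (w x)
        = ∑ x ∈ T, ∑ j ∈ Finset.range 4, g.coeff j * (c x * w x ^ j) := by
          refine Finset.sum_congr rfl fun x _ => ?_
          rw [eval_eq_sum_range' hdeg (w x), Finset.mul_sum]
          exact Finset.sum_congr rfl fun j _ => by ring
      _ = ∑ j ∈ Finset.range 4, g.coeff j * ∑ x ∈ T, c x * w x ^ j := by
          rw [Finset.sum_comm]
          exact Finset.sum_congr rfl fun j _ => (Finset.mul_sum _ _ _).symm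
      _ = 0 := Finset.sum_eq_zero fun j hj => by
          rw [h j (Finset.mem_range.mp hj), mul_zero]
  have hsingle : ∑ x ∈ T, c x * g.eval (w x) = c z * g.eval (w z) := by
    refine Finset.sum_eq_single_of_mem z hz fun x hx hne => ?_
    have hx0 : g.eval (w x) = 0 := by
      rw [hg, eval_prod]
      exact Finset.prod_eq_zero (Finset.mem_erase.mpr ⟨hne, hx⟩) (by simp)
    rw [hx0, mul_zero]
  have hne : g.eval (w z) ≠ 0 := by
    rw [hg, eval_prod]
    refine Finset.prod_ne_zero_iff.mpr fun x hx => ?_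
    rw [eval_sub, eval_X, eval_C, sub_ne_zero]
    exact Ne.symm (hdist x (Finset.mem_erase.mp hx).2 (Finset.mem_erase.mp hx).1)
  exact (mul_eq_zero.mp (hsingle ▸ key)).resolve_right hne

/-- Separation by a product of two affine forms. -/
lemma biaff_aux {F ι : Type*} [Field F] (T : Finset ι) (c s p : ι → F)
    (h : ∀ j k : ℕ, j + k ≤ 2 → ∑ x ∈ T, c x * s x ^ j * p x ^ k = 0)
    (α₀ α₁ α₂ β₀ β₁ β₂ : F) (z : ι) (hz : z ∈ T)
    (hzz : (α₀ + α₁ * s z + α₂ * p z) * (β₀ + β₁ * s z + β₂ * p z) ≠ 0)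
    (hother : ∀ x ∈ T, x ≠ z →
      (α₀ + α₁ * s x + α₂ * p x) * (β₀ + β₁ * s x + β₂ * p x) = 0) :
    c z = 0 := by
  have expand : ∑ x ∈ T, c x * ((α₀ + α₁ * s x + α₂ * p x) * (β₀ + β₁ * s x + β₂ * p x)) =
      α₀*β₀ * ∑ x ∈ T, c x * s x ^ 0 * p x ^ 0
      + (α₀*β₁ + α₁*β₀) * ∑ x ∈ T, c x * s x ^ 1 * p x ^ 0
      + (α₀*β₂ + α₂*β₀) * ∑ x ∈ T, c x * s x ^ 0 * p x ^ 1
      + α₁*β₁ * ∑ x ∈ T, c x * s x ^ 2 * p x ^ 0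
      + (α₁*β₂ + α₂*β₁) * ∑ x ∈ T, c x * s x ^ 1 * p x ^ 1
      + α₂*β₂ * ∑ x ∈ T, c x * s x ^ 0 * p x ^ 2 := by
    simp only [Finset.mul_sum, ← Finset.sum_add_distrib]
    exact Finset.sum_congr rfl fun x _ => by ring
  have hzero : ∑ x ∈ T, c x * ((α₀ + α₁ * s x + α₂ * p x) * (β₀ + β₁ * s x + β₂ * p x)) = 0 := by
    rw [expand, h 0 0 (by norm_num), h 1 0 (by norm_num), h 0 1 (by norm_num),
      h 2 0 (by norm_num), h 1 1 (by norm_num), h 0 2 (by norm_num)]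
    ring
  have hsingle : ∑ x ∈ T, c x * ((α₀ + α₁ * s x + α₂ * p x) * (β₀ + β₁ * s x + β₂ * p x)) =
      c z * ((α₀ + α₁ * s z + α₂ * p z) * (β₀ + β₁ * s z + β₂ * p z)) :=
    Finset.sum_eq_single_of_mem z hz fun x hx hne => by rw [hother x hx hne, mul_zero]
  exact (mul_eq_zero.mp (hsingle ▸ hzero)).resolve_right hzz

/-- Cross product lemma: two vectors parallel to a nonzero vector are parallel. -/
lemma cross_aux {F : Type*} [Field F] (u1 u2 v1 v2 w1 w2 : F) (hw : w1 ≠ 0 ∨ w2 ≠ 0)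
    (h1 : u1*w2 - u2*w1 = 0) (h2 : v1*w2 - v2*w1 = 0) : u1*v2 - u2*v1 = 0 := by
  rcases hw with hw | hw
  · have key : (u1*v2 - u2*v1) * w1 = v1 * (u1*w2 - u2*w1) - u1*(v1*w2 - v2*w1) := by ring
    rw [h1, h2] at key
    simpa [hw] using key
  · have key : (u1*v2 - u2*v1) * w2 = v2 * (u1*w2 - u2*w1) - u2*(v1*w2 - v2*w1) := by ring
    rw [h1, h2] at key
    simpa [hw] using key

/-- Separate one point from another by an affine form. -/
lemma ptsep_aux {F : Type*} [Field F] (sQ pQ sz pz : F) (h : sQ ≠ sz ∨ pQ ≠ pz) :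
    ∃ γ₀ γ₁ γ₂ : F, γ₀ + γ₁*sQ + γ₂*pQ = 0 ∧ γ₀ + γ₁*sz + γ₂*pz ≠ 0 := by
  rcases h with h | h
  · refine ⟨-sQ, 1, 0, by ring, ?_⟩
    intro hc
    exact h (by linear_combination -hc)
  · refine ⟨-pQ, 0, 1, by ring, ?_⟩
    intro hc
    exact h (by linear_combination -hc)

/-- Main combinatorial lemma: at most 4 distinct points of the plane impose
independent conditions on the space spanned by `1,s,p,s²,sp,p²,s³,p³`. -/
lemma main_aux {F ι : Type*} [Field F] [DecidableEq ι] (T : Finset ι) (hT : T.card ≤ 4)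
    (c s p : ι → F)
    (hinj : ∀ x ∈ T, ∀ y ∈ T, s x = s y → p x = p y → x = y)
    (hs : ∀ j < 4, ∑ x ∈ T, c x * s x ^ j = 0)
    (hp : ∀ k < 4, ∑ x ∈ T, c x * p x ^ k = 0)
    (hmix : ∀ j k : ℕ, j + k ≤ 2 → ∑ x ∈ T, c x * s x ^ j * p x ^ k = 0)
    (z : ι) (hz : z ∈ T) : c z = 0 := by
  classical
  -- coordinates of two distinct points of T differ
  have hdiff : ∀ x ∈ T, ∀ y ∈ T, x ≠ y → s x ≠ s y ∨ p x ≠ p y := by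
    intro x hx y hy hne
    by_contra hc
    push_neg at hc
    exact hne (hinj x hx y hy hc.1 hc.2)
  -- helper: separate a single point Q from z
  have ptsep : ∀ Q ∈ T, Q ≠ z → ∃ γ₀ γ₁ γ₂ : F,
      γ₀ + γ₁ * s Q + γ₂ * p Q = 0 ∧ γ₀ + γ₁ * s z + γ₂ * p z ≠ 0 := fun Q hQ hne =>
    ptsep_aux _ _ _ _ (hdiff Q hQ z hz hne)
  have hmemT' : ∀ x ∈ T.erase z, x ∈ T ∧ x ≠ z := fun x hx =>
    ⟨Finset.mem_of_mem_erase hx, Finset.ne_of_mem_erase hx⟩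
  have hcard' : (T.erase z).card ≤ 3 := by
    have := Finset.card_erase_of_mem hz; omega
  -- Lagrange helper for a coordinate function
  have lagS : (∀ x ∈ T, x ≠ z → s x ≠ s z) → c z = 0 := fun hd =>
    lag_aux T hT c s hs z hz hd
  have lagP : (∀ x ∈ T, x ≠ z → p x ≠ p z) → c z = 0 := fun hd =>
    lag_aux T hT c p hp z hz hd
  interval_cases hcc : (T.erase z).card
  · -- empty: T = {z}
    refine biaff_aux T c s p hmix 1 0 0 1 0 0 z hz (by norm_num) ?_
    intro x hx hne
    exact absurd (Finset.mem_erase.mpr ⟨hne, hx⟩)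
      (by rw [Finset.card_eq_zero.mp hcc]; exact Finset.notMem_empty x)
  · -- one other point a
    obtain ⟨a, ha⟩ := Finset.card_eq_one.mp hcc
    obtain ⟨haT, haz⟩ := hmemT' a (by rw [ha]; exact Finset.mem_singleton_self a)
    obtain ⟨γ₀, γ₁, γ₂, hQ0, hzne⟩ := ptsep a haT haz
    refine biaff_aux T c s p hmix γ₀ γ₁ γ₂ 1 0 0 z hz ?_ ?_
    · simpa using hzne
    · intro x hx hne
      have : x = a := by
        have := Finset.mem_erase.mpr ⟨hne, hx⟩
        rw [ha, Finset.mem_singleton] at this; exact this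
      rw [this, hQ0, zero_mul]
  · -- two other points a b
    obtain ⟨a, b, hab, hT'⟩ := Finset.card_eq_two.mp hcc
    obtain ⟨haT, haz⟩ := hmemT' a (by rw [hT']; simp)
    obtain ⟨hbT, hbz⟩ := hmemT' b (by rw [hT']; simp)
    obtain ⟨γ₀, γ₁, γ₂, hQ0, hzne⟩ := ptsep a haT haz
    obtain ⟨δ₀, δ₁, δ₂, hR0, hzne'⟩ := ptsep b hbT hbz
    refine biaff_aux T c s p hmix γ₀ γ₁ γ₂ δ₀ δ₁ δ₂ z hz (mul_ne_zero hzne hzne') ?_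
    intro x hx hne
    have : x = a ∨ x = b := by
      have := Finset.mem_erase.mpr ⟨hne, hx⟩
      rw [hT'] at this; simpa using this
    rcases this with rfl | rfl
    · rw [hQ0, zero_mul]
    · rw [hR0, mul_zero]
  · -- three other points a b c₃
    obtain ⟨a, b, c₃, hab, hac, hbc, hT'⟩ := Finset.card_eq_three.mp hcc
    obtain ⟨haT, haz⟩ := hmemT' a (by rw [hT']; simp)
    obtain ⟨hbT, hbz⟩ := hmemT' b (by rw [hT']; simp)
    obtain ⟨hcT, hcz⟩ := hmemT' c₃ (by rw [hT']; simp)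
    -- the affine form of the line through two points x, y, evaluated at w
    set D : ι → ι → ι → F := fun x y w =>
      (s y - s x) * (p w - p x) - (p y - p x) * (s w - s x) with hD
    have hDapp : ∀ x y w, D x y w
        = (s y - s x) * (p w - p x) - (p y - p x) * (s w - s x) := fun _ _ _ => rfl
    have hDself1 : ∀ x y, D x y x = 0 := fun x y => by rw [hDapp]; ring
    have hDself2 : ∀ x y, D x y y = 0 := fun x y => by rw [hDapp]; ring
    -- line(x,y) as a biaff form: coefficients
    have lineform : ∀ x y w : ι,
        ((p y - p x) * s x - (s y - s x) * p x) + (-(p y - p x)) * s w + (s y - s x) * p w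
          = D x y w := fun x y w => by rw [hDapp]; ring
    by_cases hcol : D a b c₃ = 0
    · -- a, b, c₃ collinear
      by_cases hzline : D a b z = 0
      · -- all four points on one line
        have honline : ∀ x ∈ T, D a b x = 0 := by
          intro x hx
          have hxmem : x = z ∨ x ∈ T.erase z := by
            by_cases h : x = z
            · exact Or.inl h
            · exact Or.inr (Finset.mem_erase.mpr ⟨h, hx⟩)
          rcases hxmem with rfl | hx'
          · exact hzline
          · rw [hT'] at hx'
            have hx3 : x = a ∨ x = b ∨ x = c₃ := by simpa using hx'
            rcases hx3 with rfl | rfl | rfl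
            · exact hDself1 _ _
            · exact hDself2 _ _
            · exact hcol
        by_cases hd1 : s b - s a = 0
        · -- vertical line: all s equal, p distinct
          have hd2 : p b - p a ≠ 0 := by
            rcases hdiff a haT b hbT hab with h | h
            · exact absurd hd1 (sub_ne_zero_of_ne (Ne.symm h))
            · exact sub_ne_zero_of_ne (Ne.symm h)
          have hsame : ∀ x ∈ T, s x = s a := by
            intro x hx
            have h0 := honline x hx
            rw [hDapp] at h0
            have h2 : (p b - p a) * (s x - s a) = 0 := by
              linear_combination hd1 * (p x - p a) - h0
            have h3 := (mul_eq_zero.mp h2).resolve_left hd2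
            linear_combination h3
          refine lagP ?_
          intro x hx hne hpe
          exact hne (hinj x hx z hz (by rw [hsame x hx, hsame z hz]) hpe)
        · -- s-coordinates all distinct
          refine lagS ?_
          intro x hx hne hse
          apply hne
          have h1 := honline x hx
          have h2 := honline z hz
          rw [hDapp] at h1 h2
          have h3 : (s b - s a) * (p x - p z) = 0 := by
            linear_combination h1 - h2 + (p b - p a) * hse
          have h4 := (mul_eq_zero.mp h3).resolve_left hd1
          exact hinj x hx z hz hse (by linear_combination h4)
      · -- z off the line: use line(a,b) alone
        refine biaff_aux T c s p hmix
          ((p b - p a) * s a - (s b - s a) * p a) (-(p b - p a)) (s b - s a) 1 0 0 z hz ?_ ?_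
        · rw [lineform]
          simpa using hzline
        · intro x hx hne
          have hx' : x ∈ T.erase z := Finset.mem_erase.mpr ⟨hne, hx⟩
          rw [hT'] at hx'
          rw [lineform]
          have hx3 : x = a ∨ x = b ∨ x = c₃ := by simpa using hx'
          rcases hx3 with rfl | rfl | rfl
          · rw [hDself1]; ring
          · rw [hDself2]; ring
          · rw [hcol]; ring
    · -- a, b, c₃ not collinear: z off line(a,b) or off line(a,c₃)
      have hkey : D a b z ≠ 0 ∨ D a c₃ z ≠ 0 := by
        by_contra hc
        push_neg at hc
        apply hcol
        have hw : s z - s a ≠ 0 ∨ p z - p a ≠ 0 := by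
          rcases hdiff z hz a haT (Ne.symm haz) with h | h
          · exact Or.inl (fun hc => h (by linear_combination hc))
          · exact Or.inr (fun hc => h (by linear_combination hc))
        have hc1 := hc.1
        have hc2 := hc.2
        rw [hDapp] at hc1 hc2
        have hcr := cross_aux (s b - s a) (p b - p a) (s c₃ - s a) (p c₃ - p a)
          (s z - s a) (p z - p a) hw
          (by linear_combination hc1) (by linear_combination hc2)
        rw [hDapp]
        linear_combination hcr
      rcases hkey with hline | hline
      · -- line(a,b) · (affine separating c₃ from z)
        obtain ⟨γ₀, γ₁, γ₂, hQ0, hzne⟩ := ptsep c₃ hcT hcz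
        refine biaff_aux T c s p hmix
          ((p b - p a) * s a - (s b - s a) * p a) (-(p b - p a)) (s b - s a) γ₀ γ₁ γ₂ z hz ?_ ?_
        · rw [lineform]
          exact mul_ne_zero hline hzne
        · intro x hx hne
          have hx' : x ∈ T.erase z := Finset.mem_erase.mpr ⟨hne, hx⟩
          rw [hT'] at hx'
          rw [lineform]
          have hx3 : x = a ∨ x = b ∨ x = c₃ := by simpa using hx'
          rcases hx3 with rfl | rfl | rfl
          · rw [hDself1, zero_mul]
          · rw [hDself2, zero_mul]
          · rw [hQ0, mul_zero]
      · -- line(a,c₃) · (affine separating b from z)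
        obtain ⟨γ₀, γ₁, γ₂, hQ0, hzne⟩ := ptsep b hbT hbz
        refine biaff_aux T c s p hmix
          ((p c₃ - p a) * s a - (s c₃ - s a) * p a) (-(p c₃ - p a)) (s c₃ - s a) γ₀ γ₁ γ₂ z hz ?_ ?_
        · rw [lineform]
          exact mul_ne_zero hline hzne
        · intro x hx hne
          have hx' : x ∈ T.erase z := Finset.mem_erase.mpr ⟨hne, hx⟩
          rw [hT'] at hx'
          rw [lineform]
          have hx3 : x = a ∨ x = b ∨ x = c₃ := by simpa using hx'
          rcases hx3 with rfl | rfl | rfl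
          · rw [hDself1, zero_mul]
          · rw [hQ0, mul_zero]
          · rw [hDself2, zero_mul]


/-- Let `q ≥ 5` be a prime power, `F = F_q`, `K = F_{q²}`, and `S ⊆ K` a finite subset
containing no conjugate pair.  Let `𝓕 ⊆ F^S` be the `F`-span of the eight vectors
obtained by evaluating `1`, `x^{q+1}`, `x^{2(q+1)}`, `x^{3(q+1)}`, `x^q + x`,
`x^{2q} + x²`, `x^{3q} + x³` and `x^{2q+1} + x^{q+2}` at the points of `S` (all of
these values lie in `F`, witnessed by the functions `ν, τ, τ₂, τ₃, lam : K → F`).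
Then every nonzero vector of the Euclidean dual `𝓕^⊥` has Hamming weight at
least `5`. -/
theorem statement11 {q : ℕ} (hq : ∃ p e : ℕ, p.Prime ∧ 0 < e ∧ q = p ^ e) (hq5 : 5 ≤ q)
    (F K : Type*) [Field F] [Fintype F] [DecidableEq F]
    [Field K] [Fintype K] [Algebra F K]
    (hF : Fintype.card F = q) (hK : Fintype.card K = q ^ 2)
    (S : Finset K) (hS : ∀ x ∈ S, ∀ y ∈ S, x ≠ y → y ≠ x ^ q)
    (ν τ τ₂ τ₃ lam : K → F)
    (hν : ∀ x : K, algebraMap F K (ν x) = x ^ (q + 1))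
    (hν₂ : ∀ x : K, algebraMap F K (ν x ^ 2) = x ^ (2 * (q + 1)))
    (hν₃ : ∀ x : K, algebraMap F K (ν x ^ 3) = x ^ (3 * (q + 1)))
    (hτ : ∀ x : K, algebraMap F K (τ x) = x ^ q + x)
    (hτ₂ : ∀ x : K, algebraMap F K (τ₂ x) = x ^ (2 * q) + x ^ 2)
    (hτ₃ : ∀ x : K, algebraMap F K (τ₃ x) = x ^ (3 * q) + x ^ 3)
    (hlam : ∀ x : K, algebraMap F K (lam x) = x ^ (2 * q + 1) + x ^ (q + 2))
    (𝓕 : Submodule F (S → F))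
    (h𝓕 : 𝓕 = Submodule.span F
      ({fun _ => 1, fun x : S => ν (x : K), fun x : S => ν (x : K) ^ 2,
        fun x : S => ν (x : K) ^ 3, fun x : S => τ (x : K), fun x : S => τ₂ (x : K),
        fun x : S => τ₃ (x : K), fun x : S => lam (x : K)} : Set (S → F))) :
    ∀ u ∈ dualCode 𝓕, u ≠ 0 → 5 ≤ hammingNorm u := by
  classical
  intro u hu hune
  by_contra hlt
  push_neg at hlt
  -- basic algebraic identities
  have inj : Function.Injective (algebraMap F K) := (algebraMap F K).injective
  have p2q : ∀ x : K, x ^ (2*q) = (x^q)^2 := fun x => by rw [mul_comm, pow_mul]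
  have p3q : ∀ x : K, x ^ (3*q) = (x^q)^3 := fun x => by rw [mul_comm, pow_mul]
  have pq1 : ∀ x : K, x ^ (q+1) = x^q * x := fun x => pow_succ x q
  have p2q1 : ∀ x : K, x ^ (2*q+1) = (x^q)^2 * x := fun x => by rw [pow_succ, p2q]
  have pq2 : ∀ x : K, x ^ (q+2) = x^q * x^2 := fun x => pow_add x q 2
  have key2 : ∀ x : K, (τ x)^2 = τ₂ x + 2 * ν x := by
    intro x
    apply inj
    rw [map_pow, hτ, map_add, hτ₂, map_mul, hν, map_ofNat]
    rw [p2q, pq1]; ring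
  have key3 : ∀ x : K, (τ x)^3 = τ₃ x + 3 * lam x := by
    intro x
    apply inj
    rw [map_pow, hτ, map_add, hτ₃, map_mul, hlam, map_ofNat]
    rw [p3q, p2q1, pq2]; ring
  have key11 : ∀ x : K, τ x * ν x = lam x := by
    intro x
    apply inj
    rw [map_mul, hτ, hν, hlam]
    rw [pq1, p2q1, pq2]; ring
  -- injectivity of the point map on S
  have hptinj : ∀ x ∈ S, ∀ y ∈ S, τ x = τ y → ν x = ν y → x = y := by
    intro x hx y hy hte hnee
    by_contra hxy
    have h1 : x^q + x = y^q + y := by rw [← hτ x, ← hτ y, hte]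
    have h2 : x^q * x = y^q * y := by
      have h2' : x^(q+1) = y^(q+1) := by rw [← hν x, ← hν y, hnee]
      rw [pow_succ, pow_succ] at h2'
      exact h2'
    have h3 : (y - x) * (y - x^q) = 0 := by linear_combination (-y) * h1 + h2
    rcases mul_eq_zero.mp h3 with h | h
    · exact hxy (sub_eq_zero.mp h).symm
    · exact hS x hx y hy hxy (sub_eq_zero.mp h)
  -- support of u
  set T : Finset S := Finset.univ.filter (fun x => u x ≠ 0) with hTdef
  have hTcard : T.card ≤ 4 := by
    have hnorm : hammingNorm u = T.card := by
      rw [hTdef, hammingNorm]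
    omega
  -- orthogonality to the eight generators, restricted to T
  have hu' : ∀ v ∈ 𝓕, ∑ i, u i * v i = 0 := hu
  have restrict : ∀ v : S → F, (∑ x, u x * v x) = 0 → ∑ x ∈ T, u x * v x = 0 := by
    intro v hv
    rw [← hv]
    refine Finset.sum_subset (Finset.subset_univ T) (fun x _ hx => ?_)
    have hx0 : u x = 0 := by
      by_contra h
      exact hx (Finset.mem_filter.mpr ⟨Finset.mem_univ x, h⟩)
    rw [hx0, zero_mul]
  have hgen : ∀ v : S → F, v ∈ ({fun _ => 1, fun x : S => ν (x : K), fun x : S => ν (x : K) ^ 2,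
        fun x : S => ν (x : K) ^ 3, fun x : S => τ (x : K), fun x : S => τ₂ (x : K),
        fun x : S => τ₃ (x : K), fun x : S => lam (x : K)} : Set (S → F)) →
      ∑ x ∈ T, u x * v x = 0 := by
    intro v hv
    exact restrict v (hu' v (by rw [h𝓕]; exact Submodule.subset_span hv))
  have r1 : ∑ x ∈ T, u x * 1 = 0 := hgen _ (by left; rfl)
  have rν : ∑ x ∈ T, u x * ν (x : K) = 0 := hgen _ (by right; left; rfl)
  have rν2 : ∑ x ∈ T, u x * ν (x : K) ^ 2 = 0 := hgen _ (by right; right; left; rfl)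
  have rν3 : ∑ x ∈ T, u x * ν (x : K) ^ 3 = 0 := hgen _ (by right; right; right; left; rfl)
  have rτ : ∑ x ∈ T, u x * τ (x : K) = 0 := hgen _ (by right; right; right; right; left; rfl)
  have rτ₂ : ∑ x ∈ T, u x * τ₂ (x : K) = 0 :=
    hgen _ (by right; right; right; right; right; left; rfl)
  have rτ₃ : ∑ x ∈ T, u x * τ₃ (x : K) = 0 :=
    hgen _ (by right; right; right; right; right; right; left; rfl)
  have rlam : ∑ x ∈ T, u x * lam (x : K) = 0 :=
    hgen _ (by right; right; right; right; right; right; right; rfl)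
  -- derived moment conditions
  have E20 : ∑ x ∈ T, u x * τ (x : K) ^ 2 = 0 := by
    calc ∑ x ∈ T, u x * τ (x : K) ^ 2
        = ∑ x ∈ T, (u x * τ₂ (x : K) + 2 * (u x * ν (x : K))) :=
          Finset.sum_congr rfl fun x _ => by rw [key2]; ring
      _ = (∑ x ∈ T, u x * τ₂ (x : K)) + 2 * ∑ x ∈ T, u x * ν (x : K) := by
          rw [Finset.sum_add_distrib, Finset.mul_sum]
      _ = 0 := by rw [rτ₂, rν]; ring
  have E30 : ∑ x ∈ T, u x * τ (x : K) ^ 3 = 0 := by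
    calc ∑ x ∈ T, u x * τ (x : K) ^ 3
        = ∑ x ∈ T, (u x * τ₃ (x : K) + 3 * (u x * lam (x : K))) :=
          Finset.sum_congr rfl fun x _ => by rw [key3]; ring
      _ = (∑ x ∈ T, u x * τ₃ (x : K)) + 3 * ∑ x ∈ T, u x * lam (x : K) := by
          rw [Finset.sum_add_distrib, Finset.mul_sum]
      _ = 0 := by rw [rτ₃, rlam]; ring
  have E11 : ∑ x ∈ T, u x * τ (x : K) * ν (x : K) = 0 := by
    calc ∑ x ∈ T, u x * τ (x : K) * ν (x : K)
        = ∑ x ∈ T, u x * lam (x : K) :=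
          Finset.sum_congr rfl fun x _ => by rw [mul_assoc, key11]
      _ = 0 := rlam
  -- apply the main lemma
  obtain ⟨z0, hz0⟩ := Function.ne_iff.mp hune
  have hzT : z0 ∈ T := Finset.mem_filter.mpr ⟨Finset.mem_univ z0, hz0⟩
  refine hz0 ?_
  refine main_aux T hTcard u (fun x => τ (x : K)) (fun x => ν (x : K)) ?_ ?_ ?_ ?_ z0 hzT
  · intro x hx y hy h1 h2
    exact Subtype.ext (hptinj x x.2 y y.2 h1 h2)
  · intro j hj
    interval_cases j
    · simpa using r1
    · simpa using rτ
    · exact E20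
    · exact E30
  · intro k hk
    interval_cases k
    · simpa using r1
    · simpa using rν
    · exact rν2
    · exact rν3
  · intro j k hjk
    have hj : j ≤ 2 := by omega
    have hk : k ≤ 2 := by omega
    interval_cases j <;> interval_cases k
    · simpa using r1
    · simpa using rν
    · simpa using rν2
    · simpa using rτ
    · simpa using E11
    · omega
    · simpa using E20
    · omega
    · omega
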